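/- Let X be a real vector space, Q ⊆ X a convex set, and F a subset with ∅ ≠ F and F ≠ Q. Then F is a face of Q if and only if there exist a nonempty affine subspace M ⊆ X and a generalized semispace S generated by M such that Q ⊆ M ∪ S and F = M ∩ Q. -/

import Mathlib

/-- `F` is a face of the convex set `Q`: a nonempty convex subset of `Q` such that whenever
a point `α • u + (1 - α) • v` with `u, v ∈ Q`, `0 < α < 1` lies in `F`, both `u, v ∈ F`. -/
def IsFace {X : Type*} [AddCommGroup X] [Module ℝ X] (Q F : Set X) : Prop :=
  F.Nonempty ∧ Convex ℝ F ∧ F ⊆ Q ∧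
    ∀ u v : X, u ∈ Q → v ∈ Q → ∀ α : ℝ, 0 < α → α < 1 →
      α • u + (1 - α) • v ∈ F → u ∈ F ∧ v ∈ F

/-- `S` is a generalized semispace generated by the set `M`: a convex set disjoint from `M`
that is maximal with respect to inclusion among convex subsets disjoint from `M`. -/
def IsGenSemispace {X : Type*} [AddCommGroup X] [Module ℝ X] (M S : Set X) : Prop :=
  Convex ℝ S ∧ S ∩ M = ∅ ∧
    ∀ C : Set X, Convex ℝ C → C ∩ M = ∅ → S ⊆ C → C = S

/-- Key lemma: for a face `F` of `Q`, points of `Q` in the affine span of `F` lie in `F`. -/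
lemma face_affineSpan_inter {X : Type*} [AddCommGroup X] [Module ℝ X]
    {Q F : Set X} (hF : IsFace Q F) {x : X}
    (hxQ : x ∈ Q) (hx : x ∈ affineSpan ℝ F) : x ∈ F := by
  classical
  obtain ⟨hFne, hFconv, hFQ, hface⟩ := hF
  have hx' : x ∈ affineSpan ℝ (Set.range ((↑) : F → X)) := by
    rwa [Subtype.range_coe]
  obtain ⟨s, w, hw, hxc⟩ := eq_affineCombination_of_mem_affineSpan hx'
  rw [Finset.affineCombination_eq_linear_combination s _ w hw] at hxc
  by_cases hpos : ∀ i ∈ s, 0 ≤ w i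
  · -- convex combination: x ∈ F directly
    have := hFconv.centerMass_mem hpos (by rw [hw]; norm_num)
      (fun i _ => i.2 : ∀ i ∈ s, (i : X) ∈ F)
    rwa [Finset.centerMass, hw, inv_one, one_smul, ← hxc] at this
  · push_neg at hpos
    obtain ⟨i0, hi0s, hi0⟩ := hpos
    set tneg := s.filter (fun i => w i < 0) with htneg
    set tpos := s.filter (fun i => ¬ w i < 0) with htpos
    set N : ℝ := ∑ i ∈ tneg, (-w i) with hNdef
    set P : ℝ := ∑ i ∈ tpos, w i with hPdef
    have hsplit : ∑ i ∈ tneg, w i + ∑ i ∈ tpos, w i = 1 := by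
      rw [Finset.sum_filter_add_sum_filter_not s _ w]; exact hw
    have hPN : P = 1 + N := by
      have hN' : N = -∑ i ∈ tneg, w i := by
        rw [hNdef]; exact Finset.sum_neg_distrib w
      linarith
    have hNpos : 0 < N := by
      have hi0neg : i0 ∈ tneg := Finset.mem_filter.2 ⟨hi0s, hi0⟩
      have h1 : 0 < -w i0 := by linarith
      have h2 : ∀ i ∈ tneg, 0 ≤ -w i := fun i hi => by
        have := (Finset.mem_filter.1 hi).2; linarith
      calc 0 < -w i0 := h1
        _ ≤ N := Finset.single_le_sum h2 hi0neg
    have hP1 : 1 < P := by rw [hPN]; linarith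
    have hPpos : 0 < P := by linarith
    set a : X := tpos.centerMass w (fun i => (i : X)) with ha
    set b : X := tneg.centerMass (fun i => -w i) (fun i => (i : X)) with hb
    have haF : a ∈ F := hFconv.centerMass_mem
      (fun i hi => by have := (Finset.mem_filter.1 hi).2; linarith)
      (by rw [← hPdef]; exact hPpos) (fun i _ => i.2)
    have hbF : b ∈ F := hFconv.centerMass_mem
      (fun i hi => by have := (Finset.mem_filter.1 hi).2; linarith)
      (by rw [← hNdef]; exact hNpos) (fun i _ => i.2)
    have hPa : P • a = ∑ i ∈ tpos, w i • (i : X) := by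
      rw [ha, Finset.centerMass, ← hPdef, smul_inv_smul₀ (ne_of_gt hPpos)]
    have hNb : N • b = ∑ i ∈ tneg, (-w i) • (i : X) := by
      rw [hb, Finset.centerMass, ← hNdef, smul_inv_smul₀ (ne_of_gt hNpos)]
    have hxPN : x = P • a - N • b := by
      rw [hPa, hNb, hxc, ← Finset.sum_filter_add_sum_filter_not s (fun i => w i < 0)
        (fun i => w i • (i : X))]
      rw [← htneg, ← htpos]
      have : ∑ i ∈ tneg, (-w i) • (i : X) = -∑ i ∈ tneg, w i • (i : X) := by
        rw [← Finset.sum_neg_distrib]; congr 1; ext i; rw [neg_smul]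
      rw [this, sub_neg_eq_add, add_comm]
    -- a = (1/P) • x + (1 - 1/P) • b
    have hkey : (1/P) • x + (1 - 1/P) • b = a := by
      have h1 : (1 : ℝ) - 1/P = N/P := by
        field_simp
        linarith [hPN]
      rw [h1, hxPN, smul_sub, ← smul_assoc, ← smul_assoc]
      rw [show (1/P : ℝ) • P = 1 by rw [smul_eq_mul]; field_simp, show (1/P : ℝ) • N = N/P by
        simp [div_eq_inv_mul, mul_comm], one_smul]
      abel
    have hα1 : (0:ℝ) < 1/P := by positivity
    have hα2 : (1:ℝ)/P < 1 := by
      rw [div_lt_one hPpos]; exact hP1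
    exact (hface x b hxQ (hFQ hbF) (1/P) hα1 hα2 (hkey ▸ haF)).1

theorem face_iff_genSemispace {X : Type*} [AddCommGroup X] [Module ℝ X]
    (Q F : Set X) (hQ : Convex ℝ Q) (hne : F.Nonempty) (hFQ : F ≠ Q) :
    IsFace Q F ↔
      ∃ (M : AffineSubspace ℝ X) (S : Set X), (M : Set X).Nonempty ∧
        IsGenSemispace (M : Set X) S ∧ Q ⊆ (M : Set X) ∪ S ∧ F = (M : Set X) ∩ Q := by
  constructor
  · intro hF
    obtain ⟨hFne, hFconv, hFQsub, hface⟩ := hF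
    set M := affineSpan ℝ F with hM
    have hMne : (M : Set X).Nonempty := hne.mono (subset_affineSpan ℝ F)
    have hFMQ : F = (M : Set X) ∩ Q := by
      apply Set.Subset.antisymm
      · exact fun x hx => ⟨subset_affineSpan ℝ F hx, hFQsub hx⟩
      · rintro x ⟨hxM, hxQ⟩
        exact face_affineSpan_inter ⟨hFne, hFconv, hFQsub, hface⟩ hxQ hxM
    -- Q \ F is convex and disjoint from M
    have hQFconv : Convex ℝ (Q \ F) := by
      rintro u ⟨huQ, huF⟩ v ⟨hvQ, hvF⟩ α β hα hβ hαβ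
      refine ⟨hQ huQ hvQ hα hβ hαβ, fun hmem => ?_⟩
      rcases eq_or_lt_of_le hα with hα0 | hα0
      · rw [← hα0, zero_smul, zero_add] at hmem
        have : β = 1 := by linarith
        rw [this, one_smul] at hmem
        exact hvF hmem
      rcases eq_or_lt_of_le hβ with hβ0 | hβ0
      · rw [← hβ0, zero_smul, add_zero] at hmem
        have : α = 1 := by linarith
        rw [this, one_smul] at hmem
        exact huF hmem
      have hα1 : α < 1 := by linarith
      have hβeq : β = 1 - α := by linarith
      rw [hβeq] at hmem
      exact huF (hface u v huQ hvQ α hα0 hα1 hmem).1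
    have hQFdisj : (Q \ F) ∩ (M : Set X) = ∅ := by
      ext x
      simp only [Set.mem_inter_iff, Set.mem_diff, Set.mem_empty_iff_false, iff_false]
      rintro ⟨⟨hxQ, hxF⟩, hxM⟩
      exact hxF (face_affineSpan_inter ⟨hFne, hFconv, hFQsub, hface⟩ hxQ hxM)
    -- Zorn's lemma to get a maximal convex set disjoint from M containing Q \ F
    obtain ⟨S, hQFS, hSmax⟩ := zorn_subset_nonempty
      {C : Set X | Convex ℝ C ∧ C ∩ (M : Set X) = ∅}
      (fun c hc hchain _ => by
        refine ⟨⋃₀ c, ⟨hchain.directedOn.convex_sUnion (fun A hA => (hc hA).1), ?_⟩,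
          fun s hs => Set.subset_sUnion_of_mem hs⟩
        ext x
        simp only [Set.mem_inter_iff, Set.mem_sUnion, Set.mem_empty_iff_false, iff_false]
        rintro ⟨⟨A, hAc, hxA⟩, hxM⟩
        have := (hc hAc).2
        exact absurd this (by
          intro h
          have : x ∈ A ∩ (M : Set X) := ⟨hxA, hxM⟩
          rw [h] at this
          exact this))
      (Q \ F) ⟨hQFconv, hQFdisj⟩
    refine ⟨M, S, hMne, ⟨hSmax.prop.1, hSmax.prop.2, fun C hC hCM hSC =>
      Set.Subset.antisymm (hSmax.le_of_ge ⟨hC, hCM⟩ hSC) hSC⟩, ?_, hFMQ⟩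
    intro x hxQ
    by_cases hxF : x ∈ F
    · exact Or.inl (subset_affineSpan ℝ F hxF)
    · exact Or.inr (hQFS ⟨hxQ, hxF⟩)
  · rintro ⟨M, S, hMne, ⟨hSconv, hSM, _⟩, hQMS, hFMQ⟩
    have hMQ_mem : ∀ u v w : X, u ∈ M → v ∈ M →
        ∀ α : ℝ, 0 < α → w = α • u + (1 - α) • v → w ∈ M := by
      intro u v w hu hv α hα hw
      have : w = α • (u -ᵥ v) +ᵥ v := by
        simp only [vsub_eq_sub, vadd_eq_add, smul_sub, hw]
        module
      rw [this]
      exact M.smul_vsub_vadd_mem α hu hv hv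
    refine ⟨hne, hFMQ ▸ (M.convex.inter hQ), hFMQ ▸ Set.inter_subset_right, ?_⟩
    intro u v huQ hvQ α hα0 hα1 hw
    set w := α • u + (1 - α) • v with hwdef
    have hwM : w ∈ M := (hFMQ ▸ hw : w ∈ (M : Set X) ∩ Q).1
    have hdisj : ∀ x, x ∈ S → x ∈ (M : Set X) → False := by
      intro x h1 h2
      have : x ∈ S ∩ (M : Set X) := ⟨h1, h2⟩
      rw [hSM] at this
      exact this
    -- if v ∈ M then u ∈ M (since w ∈ M), and symmetrically
    have huM : u ∈ M := by
      by_contra huM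
      have huS : u ∈ S := (hQMS huQ).resolve_left huM
      have hvS : v ∈ S := by
        rcases hQMS hvQ with hvM | hvS
        · -- u = (1/α) • w + (1 - 1/α) • v ∈ M
          exfalso
          apply huM
          refine hMQ_mem w v u hwM hvM (1/α) (by positivity) ?_
          rw [hwdef]
          match_scalars <;> field_simp <;> ring
        · exact hvS
      exact hdisj w (hSconv huS hvS (le_of_lt hα0) (by linarith) (by ring)) hwM
    have hvM : v ∈ M := by
      by_contra hvM
      have hvS : v ∈ S := (hQMS hvQ).resolve_left hvM
      -- v = (1/(1-α)) • w + (1 - 1/(1-α)) • u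
      apply hvM
      have h1α : (0:ℝ) < 1 - α := by linarith
      refine hMQ_mem w u v hwM huM (1/(1-α)) (by positivity) ?_
      rw [hwdef]
      match_scalars <;> field_simp <;> ring
    exact ⟨hFMQ ▸ ⟨huM, huQ⟩, hFMQ ▸ ⟨hvM, hvQ⟩⟩
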